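/- Let M be an unstable module over the mod-2 Steenrod algebra and h ≥ 0. The set of elements x ∈ M such that for every k with 0 ≤ k ≤ h there exists an integer c_k with (Sq_k)^{c_k} x = 0 is a sub-A-module of M. -/

import Mathlib

/-- An *unstable module* over the mod-2 Steenrod algebra, presented by its graded
pieces, the Steenrod square operations `Sq^i : M^n → M^{n+i}`, and the
instability condition `Sq^i x = 0` for `i > deg x`. -/
structure USM where
  M : ℕ → Type
  inst : ∀ n, AddCommGroup (M n)
  sq : ∀ (i n : ℕ), M n → M (n + i)
  sq_add : ∀ i n (x y : M n), sq i n (x + y) = sq i n x + sq i n y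
  sq_zero : ∀ i n, sq i n (0 : M n) = 0
  sq0_id : ∀ n (x : M n), sq 0 n x = x
  instab : ∀ i n (x : M n), n < i → sq i n x = 0
  char2 : ∀ n (x : M n), x + x = 0

attribute [instance] USM.inst

namespace USM

variable (A : USM)

/-- Degree-cast. -/
def castM {m n : ℕ} (h : m = n) (x : A.M m) : A.M n := h ▸ x

/-- The (homogeneous) elements of `A`, together with their degree. -/
def El := Σ n, A.M n

/-- `Sq^i` on elements. -/
def sqEl (i : ℕ) (x : A.El) : A.El := ⟨x.1 + i, A.sq i x.1 x.2⟩

/-- The lower-indexed operation `Sq_k x = Sq^{|x|-k} x` (zero when `k > |x|`). -/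
def sqLow (k : ℕ) (x : A.El) : A.El :=
  if k ≤ x.1 then ⟨x.1 + (x.1 - k), A.sq (x.1 - k) x.1 x.2⟩ else ⟨x.1, 0⟩

/-- An element is zero. -/
def IsZeroEl (x : A.El) : Prop := x.2 = 0

/-- `x` lies in the largest `s`-nilpotent submodule `M_s` of `M`: every
iterated operation `(Sq_k)^c`, `k < s`, eventually vanishes on `x`
(Proposition 1.4 of the paper, originally the definition of nilpotency in [6]). -/
def NilElem (s : ℕ) (x : A.El) : Prop :=
  ∀ k < s, ∃ c : ℕ, A.IsZeroEl ((A.sqLow k)^[c] x)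

/-- `A` belongs to `Nil_s`: it is (at least) `s`-nilpotent. -/
def IsNil (s : ℕ) : Prop := ∀ x : A.El, A.NilElem s x

/-- `A` is reduced: it contains no nontrivial suspension, equivalently
`Sq₀ = (x ↦ Sq^{|x|} x)` is injective. -/
def Reduced : Prop := ∀ n (x : A.M n), A.sq n n x = 0 → x = 0

/-- Applying a composite Steenrod operation `Sq^{i₁} Sq^{i₂} ⋯` to an element. -/
def applyList : List ℕ → A.El → A.El
  | [], x => x
  | i :: L, x => A.sqEl i (applyList L x)

/-- `A` is *locally finite*: every element generates a finite submodule over the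
Steenrod algebra; equivalently (the Steenrod algebra being finite in each degree)
for every `x` all composite Steenrod operations of sufficiently large total
degree vanish on `x`. -/
def LocFinite : Prop :=
  ∀ x : A.El, ∃ N : ℕ, ∀ L : List ℕ, N ≤ L.sum → A.IsZeroEl (A.applyList L x)

end USM

/-- A morphism of unstable modules. -/
structure USMHom (A B : USM) where
  f : ∀ n, A.M n → B.M n
  map_add : ∀ n (x y : A.M n), f n (x + y) = f n x + f n y
  map_sq : ∀ i n (x : A.M n), f (n + i) (A.sq i n x) = B.sq i n (f n x)

/-- The Adem relations hold in `A` (for `0 < a < 2b`):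
`Sq^a Sq^b = Σ_{i≤a/2} C(b-1-i, a-2i) Sq^{a+b-i} Sq^i` modulo 2. -/
def USM.AdemHolds (A : USM) : Prop :=
  ∀ (a b n : ℕ) (x : A.M n), 0 < a → a < 2 * b →
    A.sq a (n + b) (A.sq b n x) =
      ∑ i ∈ (Finset.range (a / 2 + 1)).attach,
        if Nat.choose (b - 1 - i.1) (a - 2 * i.1) % 2 = 1 then
          A.castM (by have := Finset.mem_range.mp i.2; omega)
            (A.sq (a + b - i.1) (n + i.1) (A.sq i.1 n x))
        else 0

namespace SqAux

open USM

variable (A : USM)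

def Dead (k : ℕ) (y : A.El) : Prop := ∃ c : ℕ, A.IsZeroEl ((A.sqLow k)^[c] y)

lemma sqEl_mk (i n : ℕ) (w : A.M n) : A.sqEl i ⟨n, w⟩ = ⟨n + i, A.sq i n w⟩ := rfl

lemma sqLow_mk {k n : ℕ} (h : k ≤ n) (w : A.M n) :
    A.sqLow k ⟨n, w⟩ = ⟨n + (n - k), A.sq (n - k) n w⟩ := by
  simp [USM.sqLow, h]; rfl

lemma sqLow_mk_neg {k n : ℕ} (h : ¬ k ≤ n) (w : A.M n) :
    A.sqLow k ⟨n, w⟩ = ⟨n, 0⟩ := by simp [USM.sqLow, h]; rfl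

lemma zero_sqLow {k : ℕ} {y : A.El} (h : A.IsZeroEl y) : A.IsZeroEl (A.sqLow k y) := by
  obtain ⟨n, w⟩ := y
  have hw : w = 0 := h
  subst hw
  by_cases hk : k ≤ n
  · rw [sqLow_mk A hk]; exact A.sq_zero _ _
  · rw [sqLow_mk_neg A hk]; rfl

lemma zero_iter {k c : ℕ} {y : A.El} (h : A.IsZeroEl y) :
    A.IsZeroEl ((A.sqLow k)^[c] y) := by
  induction c generalizing y with
  | zero => exact h
  | succ c ih => rw [Function.iterate_succ_apply]; exact ih (zero_sqLow A h)

lemma iter_mono {k c c' : ℕ} {y : A.El} (h : A.IsZeroEl ((A.sqLow k)^[c] y)) (hc : c ≤ c') :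
    A.IsZeroEl ((A.sqLow k)^[c'] y) := by
  have he : c' = (c' - c) + c := by omega
  rw [he, Function.iterate_add_apply]
  exact zero_iter A h

lemma dead_zero {k : ℕ} {y : A.El} (h : A.IsZeroEl y) : Dead A k y := ⟨0, h⟩

lemma dead_of_sqLow {k : ℕ} {y : A.El} (h : Dead A k (A.sqLow k y)) : Dead A k y := by
  obtain ⟨c, hc⟩ := h
  exact ⟨c + 1, by rwa [Function.iterate_succ_apply]⟩

lemma dead_sqLow_self {k : ℕ} {y : A.El} (h : Dead A k y) : Dead A k (A.sqLow k y) := by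
  obtain ⟨c, hc⟩ := h
  exact ⟨c, by rw [← Function.iterate_succ_apply]; exact iter_mono A hc (Nat.le_succ c)⟩

lemma iter_add (k : ℕ) : ∀ (c n : ℕ) (w₁ w₂ : A.M n), ∃ (m : ℕ) (z₁ z₂ : A.M m),
    (A.sqLow k)^[c] ⟨n, w₁⟩ = ⟨m, z₁⟩ ∧ (A.sqLow k)^[c] ⟨n, w₂⟩ = ⟨m, z₂⟩ ∧
      (A.sqLow k)^[c] ⟨n, w₁ + w₂⟩ = ⟨m, z₁ + z₂⟩ := by
  intro c
  induction c with
  | zero => intro n w₁ w₂; exact ⟨n, w₁, w₂, rfl, rfl, rfl⟩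
  | succ c ih =>
    intro n w₁ w₂
    by_cases hk : k ≤ n
    · obtain ⟨m, z₁, z₂, h₁, h₂, h₃⟩ := ih (n + (n - k)) (A.sq (n-k) n w₁) (A.sq (n-k) n w₂)
      refine ⟨m, z₁, z₂, ?_, ?_, ?_⟩
      · erw [Function.iterate_succ_apply, sqLow_mk A hk]; exact h₁
      · erw [Function.iterate_succ_apply, sqLow_mk A hk]; exact h₂
      · erw [Function.iterate_succ_apply, sqLow_mk A hk, A.sq_add]; exact h₃
    · have hz : A.IsZeroEl ((A.sqLow k)^[c] (⟨n, 0⟩ : A.El)) := zero_iter A rfl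
      refine ⟨((A.sqLow k)^[c] (⟨n, 0⟩ : A.El)).1, 0, 0, ?_, ?_, ?_⟩
      · erw [Function.iterate_succ_apply, sqLow_mk_neg A hk]
        exact Sigma.ext rfl (heq_of_eq hz)
      · erw [Function.iterate_succ_apply, sqLow_mk_neg A hk]
        exact Sigma.ext rfl (heq_of_eq hz)
      · erw [Function.iterate_succ_apply, sqLow_mk_neg A hk]
        rw [add_zero]
        exact Sigma.ext rfl (heq_of_eq hz)

lemma dead_add {k n : ℕ} {w₁ w₂ : A.M n} (h₁ : Dead A k ⟨n, w₁⟩) (h₂ : Dead A k ⟨n, w₂⟩) :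
    Dead A k ⟨n, w₁ + w₂⟩ := by
  obtain ⟨c₁, hc₁⟩ := h₁; obtain ⟨c₂, hc₂⟩ := h₂
  obtain ⟨m, z₁, z₂, e₁, e₂, e₃⟩ := iter_add A k (max c₁ c₂) n w₁ w₂
  refine ⟨max c₁ c₂, ?_⟩
  have g₁ := iter_mono A hc₁ (le_max_left c₁ c₂)
  have g₂ := iter_mono A hc₂ (le_max_right c₁ c₂)
  rw [e₁] at g₁; rw [e₂] at g₂
  rw [e₃]
  have hz₁ : z₁ = 0 := g₁
  have hz₂ : z₂ = 0 := g₂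
  show z₁ + z₂ = 0
  rw [hz₁, hz₂, add_zero]

lemma dead_sum {k n : ℕ} {ι : Type*} {s : Finset ι} {f : ι → A.M n}
    (h : ∀ i ∈ s, Dead A k (⟨n, f i⟩ : A.El)) : Dead A k ⟨n, ∑ i ∈ s, f i⟩ := by
  classical
  revert h
  induction s using Finset.cons_induction with
  | empty => intro _; rw [Finset.sum_empty]; exact dead_zero A rfl
  | cons a s ha ih =>
    intro h
    rw [Finset.sum_cons]
    exact dead_add A (h a (Finset.mem_cons_self a s))
      (ih (fun i hi => h i (Finset.mem_cons.mpr (Or.inr hi))))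

lemma sqLow_self (n : ℕ) (w : A.M n) : A.sqLow n ⟨n, w⟩ = ⟨n, w⟩ := by
  rw [sqLow_mk A (le_refl n), Nat.sub_self, A.sq0_id]
  rfl

lemma dead_self {n : ℕ} {w : A.M n} (h : Dead A n ⟨n, w⟩) : w = 0 := by
  obtain ⟨c, hc⟩ := h
  have hfix : ∀ c, (A.sqLow n)^[c] (⟨n, w⟩ : A.El) = ⟨n, w⟩ := by
    intro c; induction c with
    | zero => rfl
    | succ c ih => erw [Function.iterate_succ_apply, sqLow_self, ih]
  rw [hfix c] at hc; exact hc

lemma sqEl_instab {i n : ℕ} (h : n < i) (w : A.M n) : A.IsZeroEl (A.sqEl i ⟨n, w⟩) :=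
  A.instab i n w h

lemma sqLow_eq_sqEl {k m : ℕ} (h : k ≤ m) (z : A.M m) :
    A.sqLow k ⟨m, z⟩ = A.sqEl (m - k) ⟨m, z⟩ := sqLow_mk A h z

lemma sqEl_eq_sqLow {j m : ℕ} (h : j ≤ m) (z : A.M m) :
    A.sqEl j ⟨m, z⟩ = A.sqLow (m - j) ⟨m, z⟩ := by
  rw [sqLow_mk A (Nat.sub_le m j)]
  have h2 : m - (m - j) = j := by omega
  rw [h2]
  rfl

lemma cast_el {m₁ m₂ : ℕ} (hm : m₁ = m₂) (w : A.M m₁) :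
    (⟨m₂, A.castM hm w⟩ : A.El) = ⟨m₁, w⟩ := by subst hm; rfl

lemma adem_dead (hA : A.AdemHolds) {k a b n : ℕ} (h0 : 0 < a) (h2 : a < 2 * b) (w : A.M n)
    (H : ∀ i : ℕ, i ≤ a / 2 → Dead A k (A.sqEl (a + b - i) (A.sqEl i ⟨n, w⟩))) :
    Dead A k (A.sqEl a (A.sqEl b ⟨n, w⟩)) := by
  have key := hA a b n w h0 h2
  show Dead A k ⟨n + b + a, A.sq a (n + b) (A.sq b n w)⟩
  rw [key]
  apply dead_sum
  intro i _
  by_cases hc : Nat.choose (b - 1 - i.1) (a - 2 * i.1) % 2 = 1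
  · rw [if_pos hc, cast_el A]
    exact H i.1 (by have := Finset.mem_range.mp i.2; omega)
  · rw [if_neg hc]; exact dead_zero A rfl

def Mono (x v : A.El) : Prop := ∃ L : List ℕ, v = A.applyList L x

lemma mono_sqEl {x v : A.El} (h : Mono A x v) (j : ℕ) : Mono A x (A.sqEl j v) := by
  obtain ⟨L, rfl⟩ := h; exact ⟨j :: L, rfl⟩

/-- Key lemma for lower index `κ < k`. -/
lemma L6 (hA : A.AdemHolds) (k : ℕ) (x : A.El)
    (H : ∀ k', k' < k → ∀ v, Mono A x v → Dead A k' v) :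
    ∀ κ, κ < k → ∀ v, Mono A x v → Dead A k (A.sqLow κ v) := by
  intro κ
  induction κ using Nat.strong_induction_on with
  | _ κ IH =>
    intro hκk
    have hκs : (k + κ) / 2 < k := by omega
    have AUX : ∀ c, ∀ v : A.El, Mono A x v →
        A.IsZeroEl ((A.sqLow ((k + κ) / 2))^[c] v) → Dead A k (A.sqLow κ v) := by
      intro c
      induction c with
      | zero =>
        intro v hv h0
        exact dead_zero A (zero_sqLow A h0)
      | succ c ihc =>
        intro v hv h0
        obtain ⟨n, w⟩ := v
        by_cases hκn : κ ≤ n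
        · by_cases huk : n + (n - κ) < k
          · refine ⟨1, ?_⟩
            rw [Function.iterate_one, sqLow_mk A hκn, sqLow_mk_neg A (by omega)]
            rfl
          · by_cases huk2 : n + (n - κ) = k
            · have hnk : n < k := by omega
              have hw0 : w = 0 := dead_self A (H n hnk ⟨n, w⟩ hv)
              subst hw0
              exact dead_zero A (zero_sqLow A rfl)
            · have hku : k < n + (n - κ) := by omega
              have hκn' : κ < n := by omega
              apply dead_of_sqLow
              rw [sqLow_mk A hκn, sqLow_eq_sqEl A (show k ≤ n + (n - κ) by omega)]
              show Dead A k (A.sqEl (n + (n - κ) - k) (A.sqEl (n - κ) ⟨n, w⟩))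
              apply adem_dead A hA (show 0 < n + (n - κ) - k by omega)
                (show n + (n - κ) - k < 2 * (n - κ) by omega) w
              intro i hi
              by_cases hie : n + i < n + (n - κ) - k + (n - κ) - i
              · exact dead_zero A (sqEl_instab A hie _)
              · push_neg at hie
                rw [sqEl_mk A, sqEl_eq_sqLow A hie]
                have hle : (n + i) - (n + (n - κ) - k + (n - κ) - i) ≤ κ := by omega
                rcases hle.lt_or_eq with hlt | heq
                · exact IH _ hlt (by omega) ⟨n + i, A.sq i n w⟩ (mono_sqEl A hv i)
                · rw [heq]
                  have hκsn : (k + κ) / 2 ≤ n := by omega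
                  have hni : n - (k + κ) / 2 = i := by omega
                  erw [Function.iterate_succ_apply, sqLow_mk A hκsn, hni] at h0
                  exact ihc ⟨n + i, A.sq i n w⟩ (mono_sqEl A hv i) h0
        · exact dead_zero A (by rw [sqLow_mk_neg A hκn]; rfl)
    intro v hv
    obtain ⟨c, hc⟩ := H ((k + κ) / 2) hκs v hv
    exact AUX c v hv hc

/-- Key lemma for lower index `κ > k`: induction on the `Sq_k`-nilpotency index of `v`. -/
lemma L7 (hA : A.AdemHolds) (k : ℕ) (x : A.El)
    (H : ∀ k', k' < k → ∀ v, Mono A x v → Dead A k' v) :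
    ∀ c, ∀ v : A.El, Mono A x v → A.IsZeroEl ((A.sqLow k)^[c] v) →
      ∀ κ, k < κ → Dead A k (A.sqLow κ v) := by
  intro c
  induction c with
  | zero =>
    intro v hv h0 κ hκ
    exact dead_zero A (zero_sqLow A h0)
  | succ c ihc =>
    intro v hv h0 κ hκ
    obtain ⟨n, w⟩ := v
    by_cases hκn : κ ≤ n
    · by_cases hκn' : κ = n
      · subst hκn'
        rw [sqLow_self]
        exact ⟨c + 1, h0⟩
      · have hκltn : κ < n := by omega
        have hkn : k < n := by omega
        apply dead_of_sqLow
        rw [sqLow_mk A hκn, sqLow_eq_sqEl A (show k ≤ n + (n - κ) by omega)]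
        rw [show n + (n - κ) - k = (n - κ) + (n - k) by omega]
        -- Adem on Sq^{2(n-κ)} Sq^{n-k}
        have key := hA (2 * (n - κ)) (n - k) n w (by omega) (by omega)
        have hmem1 : (n - κ) ∈ Finset.range (2 * (n - κ) / 2 + 1) := by
          rw [Finset.mem_range]; omega
        have hmem2 : (⟨n - κ, hmem1⟩ : {y // y ∈ Finset.range (2 * (n - κ) / 2 + 1)}) ∈
            (Finset.range (2 * (n - κ) / 2 + 1)).attach := Finset.mem_attach _ _
        rw [← Finset.add_sum_erase _ _ hmem2] at key
        dsimp only at key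
        rw [if_pos (show Nat.choose ((n - k) - 1 - (n - κ)) (2 * (n - κ) - 2 * (n - κ)) % 2 = 1
          from by rw [Nat.sub_self, Nat.choose_zero_right])] at key
        -- key : sqBig = castM P z + R
        have flip : ∀ (p q r : A.M (n + (n - k) + 2 * (n - κ))), p = q + r → q = p + r := by
          intro p q r hpq
          calc q = q + 0 := (add_zero q).symm
            _ = q + (r + r) := by rw [A.char2]
            _ = (q + r) + r := (add_assoc q r r).symm
            _ = p + r := by rw [← hpq]
        have key2 := flip _ _ _ key
        have key3 := congrArg (fun t => (⟨n + (n - k) + 2 * (n - κ), t⟩ : A.El)) key2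
        rw [show n - κ + (n - k) = 2 * (n - κ) + (n - k) - (n - κ) from by omega]
        rw [sqEl_mk A]
        rw [← cast_el A (show (n + (n - κ)) + (2 * (n - κ) + (n - k) - (n - κ))
              = n + (n - k) + 2 * (n - κ) from by omega)]
        rw [key3]
        refine dead_add A ?_ ?_
        · -- main term Sq^{2(n-κ)} (Sq_k v)
          erw [Function.iterate_succ_apply, sqLow_mk A (le_of_lt hkn)] at h0
          have hd1 := ihc ⟨n + (n - k), A.sq (n - k) n w⟩ (mono_sqEl A hv (n - k)) h0
            ((n + (n - k)) - 2 * (n - κ)) (by omega)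
          rw [sqLow_eq_sqEl A (by omega),
            show (n + (n - k)) - ((n + (n - k)) - 2 * (n - κ)) = 2 * (n - κ) from by omega] at hd1
          exact hd1
        · -- correction terms: lower index < k, use L6
          apply dead_sum
          intro j hj
          have hjr : j.1 < 2 * (n - κ) / 2 + 1 := Finset.mem_range.mp j.2
          have hne : j.1 ≠ n - κ := fun hh => (Finset.mem_erase.mp hj).1 (Subtype.ext hh)
          split_ifs with hcnd
          · rw [cast_el A]
            by_cases hje : n + j.1 < 2 * (n - κ) + (n - k) - j.1
            · exact dead_zero A (sqEl_instab A hje _)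
            · push_neg at hje
              show Dead A k (A.sqEl (2 * (n - κ) + (n - k) - j.1) (⟨n + j.1, A.sq j.1 n w⟩ : A.El))
              rw [sqEl_eq_sqLow A hje]
              exact L6 A hA k x H _ (by omega) _ (mono_sqEl A hv j.1)
          · exact dead_zero A rfl
    · exact dead_zero A (by rw [sqLow_mk_neg A hκn]; rfl)

/-- All monomials on a fully nilpotent element are `Dead k` for every `k ≤ h`. -/
lemma main (hA : A.AdemHolds) (h : ℕ) (x : A.El)
    (hx : ∀ k ≤ h, Dead A k x) :
    ∀ k, k ≤ h → ∀ L : List ℕ, Dead A k (A.applyList L x) := by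
  intro k
  induction k using Nat.strong_induction_on with
  | _ k IH =>
    intro hk
    have H : ∀ k', k' < k → ∀ v, Mono A x v → Dead A k' v := by
      intro k' hk' v hv
      obtain ⟨L, rfl⟩ := hv
      exact IH k' hk' (by omega) L
    intro L
    induction L with
    | nil => exact hx k hk
    | cons j L' ihL =>
      show Dead A k (A.sqEl j (A.applyList L' x))
      have hmono : Mono A x (A.applyList L' x) := ⟨L', rfl⟩
      obtain ⟨c, hc⟩ := ihL
      rcases hv : A.applyList L' x with ⟨n, w⟩
      rw [hv] at hmono hc
      by_cases hjn : j ≤ n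
      · rcases Nat.lt_trichotomy (n - j) k with hlt | heq | hgt
        · rw [sqEl_eq_sqLow A hjn]
          exact L6 A hA k x H (n - j) hlt ⟨n, w⟩ hmono
        · rw [sqEl_eq_sqLow A hjn, heq]
          exact dead_sqLow_self A ⟨c, hc⟩
        · rw [sqEl_eq_sqLow A hjn]
          exact L7 A hA k x H c ⟨n, w⟩ hmono hc (n - j) hgt
      · exact dead_zero A (sqEl_instab A (by omega) w)

end SqAux

/-- Proposition 6.1 of the paper.  In an unstable module `A`
satisfying the Adem relations, for any `h ≥ 0` the set of elements `x` such
that for every `0 ≤ k ≤ h` some iterate `(Sq_k)^{c_k}` vanishes on `x` is a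
sub-`A`-module of `A`: it is stable under all Steenrod operations (and under
addition). -/
theorem sqLow_nilpotent_set_is_submodule (A : USM) (hA : A.AdemHolds) (h : ℕ) :
    (∀ x : A.El, (∀ k ≤ h, ∃ c : ℕ, A.IsZeroEl ((A.sqLow k)^[c] x)) →
      ∀ i : ℕ, ∀ k ≤ h, ∃ c : ℕ, A.IsZeroEl ((A.sqLow k)^[c] (A.sqEl i x))) ∧
    (∀ n (x y : A.M n),
      (∀ k ≤ h, ∃ c : ℕ, A.IsZeroEl ((A.sqLow k)^[c] (⟨n, x⟩ : A.El))) →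
      (∀ k ≤ h, ∃ c : ℕ, A.IsZeroEl ((A.sqLow k)^[c] (⟨n, y⟩ : A.El))) →
      (∀ k ≤ h, ∃ c : ℕ, A.IsZeroEl ((A.sqLow k)^[c] (⟨n, x + y⟩ : A.El)))) := by
  constructor
  · intro x hx i k hk
    exact SqAux.main A hA h x (fun k hk => hx k hk) k hk [i]
  · intro n x y hx hy k hk
    obtain ⟨cx, hcx⟩ := hx k hk
    obtain ⟨cy, hcy⟩ := hy k hk
    obtain ⟨m, z₁, z₂, e₁, e₂, e₃⟩ := SqAux.iter_add A k (max cx cy) n x y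
    refine ⟨max cx cy, ?_⟩
    have g₁ := SqAux.iter_mono A hcx (le_max_left cx cy)
    have g₂ := SqAux.iter_mono A hcy (le_max_right cx cy)
    rw [e₁] at g₁; rw [e₂] at g₂
    rw [e₃]
    have hz₁ : z₁ = 0 := g₁
    have hz₂ : z₂ = 0 := g₂
    show z₁ + z₂ = 0
    rw [hz₁, hz₂, add_zero]
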